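/- Let y_1, …, y_{N−1} solve the periodic semi-discrete FtL system, let k ∈ ℝ, let j ∈ {1,…,N−1}, and let t > 0 be a time with y_j(t) ≠ k. Then the function s ↦ (y_j(s) − k)^+ is differentiable at t and its derivative at t is at most (1/ℓ)[H(y_{j+1}(t) − k)(V(y_{j+1}(t)) − V(k)) − H(y_j(t) − k)(V(y_j(t)) − V(k))]. -/
import Mathlib


/-- `y j`, `j = 1, …, N-1`, solves the periodic semi-discrete Follow-the-Leader
system `ẏ_j(t) = (1/ℓ)(V(y_{j+1}(t)) − V(y_j(t)))` on `[0, ∞)`, with the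
periodic convention `y_N := y_1`. -/
def IsFtLSolution (N : ℕ) (ℓ : ℝ) (V : ℝ → ℝ) (y : ℕ → ℝ → ℝ) : Prop :=
  (∀ t : ℝ, y N t = y 1 t) ∧
  ∀ j ∈ Finset.Icc 1 (N - 1), ∀ t ∈ Set.Ici (0 : ℝ),
    HasDerivWithinAt (y j) (1 / ℓ * (V (y (j + 1) t) - V (y j t))) (Set.Ici (0 : ℝ)) t

/-- The Heaviside function: `H(r) = 0` for `r ≤ 0` and `H(r) = 1` for `r > 0`. -/
noncomputable def heaviside (r : ℝ) : ℝ := if 0 < r then 1 else 0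

/-- If `y` solves the periodic semi-discrete FtL system, `k ∈ ℝ`,
`j ∈ {1,…,N−1}` and `t > 0` with `y_j(t) ≠ k`, then `s ↦ (y_j(s) − k)⁺` is
differentiable at `t` with derivative at most
`(1/ℓ)[H(y_{j+1}(t) − k)(V(y_{j+1}(t)) − V(k)) − H(y_j(t) − k)(V(y_j(t)) − V(k))]`. -/
theorem ftl_positive_part_entropy_inequality
    (N : ℕ) (hN : 2 ≤ N) (ℓ : ℝ) (hℓ : 0 < ℓ)
    (V : ℝ → ℝ) (LV : NNReal) (hVlip : LipschitzWith LV V) (hVmono : Monotone V)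
    (y : ℕ → ℝ → ℝ) (hy : IsFtLSolution N ℓ V y)
    (k : ℝ) (j : ℕ) (hj : j ∈ Finset.Icc 1 (N - 1))
    (t : ℝ) (ht : 0 < t) (hne : y j t ≠ k) :
    ∃ d : ℝ, HasDerivAt (fun s => max (y j s - k) 0) d t ∧
      d ≤ 1 / ℓ * (heaviside (y (j + 1) t - k) * (V (y (j + 1) t) - V k)
            - heaviside (y j t - k) * (V (y j t) - V k)) := by
  obtain ⟨hper, hode⟩ := hy
  have hD := (hode j hj t (le_of_lt ht)).hasDerivAt (Ici_mem_nhds ht)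
  have hcont : ContinuousAt (y j) t := hD.continuousAt
  have hinv : 0 ≤ 1 / ℓ := by positivity
  rcases hne.lt_or_gt with hlt | hgt
  · -- y j t < k : the positive part vanishes near t
    have hev : (fun s => max (y j s - k) 0) =ᶠ[nhds t] (fun _ => (0 : ℝ)) := by
      have hmem : y j ⁻¹' Set.Iio k ∈ nhds t := hcont (Iio_mem_nhds hlt)
      filter_upwards [hmem] with s hs
      exact max_eq_right (by simp only [Set.mem_preimage, Set.mem_Iio] at hs; linarith)
    refine ⟨0, (hasDerivAt_const t (0 : ℝ)).congr_of_eventuallyEq hev, ?_⟩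
    have hHj : heaviside (y j t - k) = 0 := by
      simp only [heaviside, if_neg (by linarith : ¬ (0 : ℝ) < y j t - k)]
    have hnn : 0 ≤ heaviside (y (j + 1) t - k) * (V (y (j + 1) t) - V k) := by
      by_cases h : 0 < y (j + 1) t - k
      · have : V k ≤ V (y (j + 1) t) := hVmono (by linarith)
        simp only [heaviside, if_pos h]; linarith
      · unfold heaviside; rw [if_neg h, zero_mul]
    rw [hHj, zero_mul, sub_zero]
    exact mul_nonneg hinv hnn
  · -- y j t > k : the positive part equals y j s - k near t
    have hev : (fun s => max (y j s - k) 0) =ᶠ[nhds t] (fun s => y j s - k) := by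
      have hmem : y j ⁻¹' Set.Ioi k ∈ nhds t := hcont (Ioi_mem_nhds hgt)
      filter_upwards [hmem] with s hs
      exact max_eq_left (by simp only [Set.mem_preimage, Set.mem_Ioi] at hs; linarith)
    refine ⟨_, (hD.sub_const k).congr_of_eventuallyEq hev, ?_⟩
    have hHj : heaviside (y j t - k) = 1 := by
      simp only [heaviside, if_pos (by linarith : (0 : ℝ) < y j t - k)]
    rw [hHj]
    refine mul_le_mul_of_nonneg_left ?_ hinv
    by_cases h : 0 < y (j + 1) t - k
    · simp only [heaviside, if_pos h]; ring_nf; linarith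
    · have : V (y (j + 1) t) ≤ V k := hVmono (by linarith)
      simp only [heaviside, if_neg h]; linarith
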